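/- Assume additionally that ∇f is ℓ-Lipschitz continuous for some ℓ > 0, that α > 3 and 1/2 > θ > 1/(α−1). Let (x,λ) be a solution of (PD-AVD) and (x*,λ*) a primal-dual optimal solution. Define φ(t) := (1/2)‖(x(t),λ(t)) − (x*,λ*)‖² and W(t) := L_β(x(t),λ*) − L_β(x*,λ(t)) + (1/2)‖(ẋ(t),λ̇(t))‖². Then for every t ≥ t₀: φ''(t) + (α/t)·φ'(t) + θt·W'(t) + (1/(2ℓ))‖∇f(x(t)) − ∇f(x*)‖² + (β/2)‖Ax(t) − b‖² ≤ 0. -/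

import Mathlib

open Set MeasureTheory Filter Topology Asymptotics
open scoped RealInnerProductSpace ENNReal

/-- The augmented Lagrangian `L_β(x,λ) = f(x) + ⟪λ, Ax − b⟫ + (β/2)‖Ax − b‖²`. -/
noncomputable def augLagrangian {X Y : Type*}
    [NormedAddCommGroup X] [InnerProductSpace ℝ X]
    [NormedAddCommGroup Y] [InnerProductSpace ℝ Y]
    (f : X → ℝ) (A : X →L[ℝ] Y) (b : Y) (β : ℝ) (u : X) (μ : Y) : ℝ :=
  f u + ⟪μ, A u - b⟫ + β / 2 * ‖A u - b‖ ^ 2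

/-- The energy function `E_{z,μ}(t)` associated to a trajectory `(x,λ)` with velocities
`(x',λ')`, where the product norm on `X × Y` is the Hilbert norm
`‖(u,v)‖² = ‖u‖² + ‖v‖²` and `ξ = θα − θ − 1`. -/
noncomputable def pdEnergy {X Y : Type*}
    [NormedAddCommGroup X] [InnerProductSpace ℝ X]
    [NormedAddCommGroup Y] [InnerProductSpace ℝ Y]
    (f : X → ℝ) (A : X →L[ℝ] Y) (b : Y) (α β θ : ℝ)
    (x : ℝ → X) (x' : ℝ → X) (l : ℝ → Y) (l' : ℝ → Y)
    (z : X) (μ : Y) (t : ℝ) : ℝ :=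
  θ ^ 2 * t ^ 2 *
      (augLagrangian f A b β (x t) μ - augLagrangian f A b β z (l t))
    + 1 / 2 * (‖x t - z + (θ * t) • x' t‖ ^ 2 + ‖l t - μ + (θ * t) • l' t‖ ^ 2)
    + (θ * α - θ - 1) / 2 * (‖x t - z‖ ^ 2 + ‖l t - μ‖ ^ 2)

section Aux

variable {X : Type*} [NormedAddCommGroup X] [InnerProductSpace ℝ X] [CompleteSpace X]

lemma grad_line_aux (f : X → ℝ) (f' : X → X) (hgrad : ∀ u, HasGradientAt f (f' u) u)
    (u d : X) (s : ℝ) :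
    HasDerivAt (fun s : ℝ => f (s • d + u)) ⟪f' (s • d + u), d⟫ s := by
  have hc : HasDerivAt (fun s : ℝ => s • d + u) d s := by
    simpa using ((hasDerivAt_id s).smul_const d).add_const u
  have h := (hgrad (s • d + u)).hasFDerivAt.comp_hasDerivAt s hc
  simp at h
  exact h

lemma convex_grad_ineq (f : X → ℝ) (f' : X → X) (hconv : ConvexOn ℝ univ f)
    (hgrad : ∀ u, HasGradientAt f (f' u) u) (u v : X) :
    f u + ⟪f' u, v - u⟫ ≤ f v := by
  set d := v - u with hd
  have hg : ConvexOn ℝ univ (fun s : ℝ => f (s • d + u)) := by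
    have := hconv.comp_affineMap (AffineMap.lineMap u v)
    simpa [Function.comp_def, AffineMap.lineMap_apply, hd] using this
  have hder := grad_line_aux f f' hgrad u d
  have hles := hg.deriv_le_slope (mem_univ (0:ℝ)) (mem_univ 1) one_pos
    (hder 0).differentiableAt
  rw [(hder 0).deriv] at hles
  simp [slope_def_field, hd] at hles
  linarith [hles]

lemma descent_lemma (f : X → ℝ) (f' : X → X)
    (hgrad : ∀ u, HasGradientAt f (f' u) u)
    (ℓ : NNReal) (hlip : LipschitzWith ℓ f') (u v : X) :
    f v ≤ f u + ⟪f' u, v - u⟫ + (ℓ:ℝ) / 2 * ‖v - u‖ ^ 2 := by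
  set d := v - u with hd
  set k : ℝ → ℝ := fun s => f (s • d + u) - s * ⟪f' u, d⟫ - (ℓ:ℝ) * s ^ 2 / 2 * ‖d‖ ^ 2 with hk
  have hder : ∀ s : ℝ, HasDerivAt k
      (⟪f' (s • d + u), d⟫ - ⟪f' u, d⟫ - (ℓ:ℝ) * s * ‖d‖ ^ 2) s := by
    intro s
    have h1 := grad_line_aux f f' hgrad u d s
    have h2 : HasDerivAt (fun s : ℝ => s * ⟪f' u, d⟫) ⟪f' u, d⟫ s := by
      simpa using (hasDerivAt_id s).mul_const ⟪f' u, d⟫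
    have h3 : HasDerivAt (fun s : ℝ => (ℓ:ℝ) * s ^ 2 / 2 * ‖d‖ ^ 2)
        ((ℓ:ℝ) * s * ‖d‖ ^ 2) s := by
      have : HasDerivAt (fun s : ℝ => s ^ 2) (2 * s) s := by
        simpa using hasDerivAt_pow 2 s
      have := ((this.const_mul (ℓ:ℝ)).div_const 2).mul_const (‖d‖ ^ 2)
      convert this using 1
      · rfl
      · rfl
      ring
    exact (h1.sub h2).sub h3
  have hanti : AntitoneOn k (Icc 0 1) := by
    apply antitoneOn_of_deriv_nonpos (convex_Icc 0 1)
    · exact fun s _ => (hder s).continuousAt.continuousWithinAt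
    · exact fun s _ => ((hder s).differentiableAt).differentiableWithinAt
    · intro s hs
      rw [interior_Icc] at hs
      rw [(hder s).deriv]
      have hcs : ⟪f' (s • d + u) - f' u, d⟫ ≤ ‖f' (s • d + u) - f' u‖ * ‖d‖ :=
        real_inner_le_norm _ _
      have hlipb : ‖f' (s • d + u) - f' u‖ ≤ (ℓ:ℝ) * (s * ‖d‖) := by
        have := hlip.dist_le_mul (s • d + u) u
        rw [dist_eq_norm, dist_eq_norm] at this
        calc ‖f' (s • d + u) - f' u‖ ≤ (ℓ:ℝ) * ‖s • d + u - u‖ := this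
        _ = (ℓ:ℝ) * (s * ‖d‖) := by
            rw [add_sub_cancel_right, norm_smul, Real.norm_eq_abs, abs_of_pos hs.1]
      rw [inner_sub_left] at hcs
      nlinarith [norm_nonneg d, hs.1.le, ℓ.coe_nonneg]
  have h01 := hanti (left_mem_Icc.2 zero_le_one) (right_mem_Icc.2 zero_le_one) zero_le_one
  simp only [hk] at h01
  have hv : (1:ℝ) • d + u = v := by simp [hd]
  rw [hv] at h01
  simp at h01
  nlinarith [h01]

lemma cocoercive (f : X → ℝ) (f' : X → X) (hconv : ConvexOn ℝ univ f)
    (hgrad : ∀ u, HasGradientAt f (f' u) u)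
    (ℓ : NNReal) (hℓ : 0 < ℓ) (hlip : LipschitzWith ℓ f') (u v : X) :
    1 / (2 * (ℓ:ℝ)) * ‖f' u - f' v‖ ^ 2 ≤ ⟪f' u - f' v, u - v⟫ := by
  have hℓ' : (0:ℝ) < ℓ := hℓ
  set w : X := v - ((ℓ:ℝ)⁻¹) • (f' v - f' u) with hw
  have h1 := convex_grad_ineq f f' hconv hgrad u w
  have h2 := descent_lemma f f' hgrad ℓ hlip v w
  have h3 := convex_grad_ineq f f' hconv hgrad v u
  have hwv : w - v = -(((ℓ:ℝ)⁻¹) • (f' v - f' u)) := by rw [hw]; abel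
  have hwu : w - u = v - u - ((ℓ:ℝ)⁻¹) • (f' v - f' u) := by rw [hw]; abel
  rw [hwv] at h2
  rw [hwu] at h1
  rw [inner_sub_right, real_inner_smul_right] at h1
  rw [inner_neg_right, real_inner_smul_right, norm_neg, norm_smul] at h2
  have hns : (‖((ℓ:ℝ)⁻¹)‖ * ‖f' v - f' u‖) ^ 2 = ((ℓ:ℝ)⁻¹) ^ 2 * ‖f' v - f' u‖ ^ 2 := by
    rw [mul_pow, Real.norm_eq_abs, sq_abs]
  rw [hns] at h2
  have e0 : ⟪f' v, u - v⟫ = -⟪f' v, v - u⟫ := by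
    rw [← inner_neg_right]; congr 1; abel
  have key : ⟪f' u, v - u⟫ - ((ℓ:ℝ)⁻¹) * ⟪f' u, f' v - f' u⟫
      ≤ ⟪f' v, v - u⟫ - ((ℓ:ℝ)⁻¹) * ⟪f' v, f' v - f' u⟫
        + (ℓ:ℝ)/2 * (((ℓ:ℝ)⁻¹) ^ 2 * ‖f' v - f' u‖ ^ 2) := by linarith
  have e1 : ⟪f' u, v - u⟫ - ⟪f' v, v - u⟫ = ⟪f' u - f' v, v - u⟫ := by
    rw [inner_sub_left]
  have e2 : ⟪f' v, f' v - f' u⟫ - ⟪f' u, f' v - f' u⟫ = ‖f' u - f' v‖ ^ 2 := by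
    rw [← inner_sub_left, real_inner_self_eq_norm_sq, ← norm_neg]
    congr 2 <;> abel
  have e3 : ⟪f' u - f' v, v - u⟫ = -⟪f' u - f' v, u - v⟫ := by
    rw [← inner_neg_right]; congr 1; abel
  have e4 : ‖f' v - f' u‖ = ‖f' u - f' v‖ := by rw [← norm_neg]; congr 1; abel
  rw [e4] at key
  have hA : (ℓ:ℝ)⁻¹ * ⟪f' v, f' v - f' u⟫ - (ℓ:ℝ)⁻¹ * ⟪f' u, f' v - f' u⟫
      = (ℓ:ℝ)⁻¹ * ‖f' u - f' v‖ ^ 2 := by rw [← mul_sub, e2]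
  have hB : (ℓ:ℝ)/2 * (((ℓ:ℝ)⁻¹) ^ 2 * ‖f' u - f' v‖ ^ 2)
      = 1 / (2 * (ℓ:ℝ)) * ‖f' u - f' v‖ ^ 2 := by
    field_simp
  have hC : (ℓ:ℝ)⁻¹ * ‖f' u - f' v‖ ^ 2 = 2 * (1 / (2 * (ℓ:ℝ)) * ‖f' u - f' v‖ ^ 2) := by
    field_simp
  linarith [key, e1, e3, hA, hB, hC]

end Aux

theorem stmt10
    {X Y : Type*}
    [NormedAddCommGroup X] [InnerProductSpace ℝ X] [CompleteSpace X]
    [NormedAddCommGroup Y] [InnerProductSpace ℝ Y] [CompleteSpace Y]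
    (f : X → ℝ) (f' : X → X) (A : X →L[ℝ] Y) (b : Y)
    (hconv : ConvexOn ℝ univ f)
    (hgrad : ∀ u, HasGradientAt f (f' u) u)
    (hf'cont : Continuous f')
    (ℓ : NNReal) (hℓ : 0 < ℓ) (hlip : LipschitzWith ℓ f')
    (t₀ α β θ : ℝ) (ht₀ : 0 < t₀) (hα : 3 < α) (hβ : 0 ≤ β)
    (hθ1 : 1 / (α - 1) < θ) (hθ2 : θ < 1 / 2)
    (x : ℝ → X) (x' x'' : ℝ → X) (l : ℝ → Y) (l' l'' : ℝ → Y)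
    (hx1 : ∀ t ∈ Ici t₀, HasDerivAt x (x' t) t)
    (hx2 : ∀ t ∈ Ici t₀, HasDerivAt x' (x'' t) t)
    (hx3 : ContinuousOn x'' (Ici t₀))
    (hl1 : ∀ t ∈ Ici t₀, HasDerivAt l (l' t) t)
    (hl2 : ∀ t ∈ Ici t₀, HasDerivAt l' (l'' t) t)
    (hl3 : ContinuousOn l'' (Ici t₀))
    (hode1 : ∀ t ∈ Ici t₀, x'' t + (α / t) • x' t + f' (x t)
        + (ContinuousLinearMap.adjoint A) (l t + (θ * t) • l' t)
        + β • (ContinuousLinearMap.adjoint A) (A (x t) - b) = 0)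
    (hode2 : ∀ t ∈ Ici t₀, l'' t + (α / t) • l' t
        - (A (x t + (θ * t) • x' t) - b) = 0)
    (xs : X) (ls : Y)
    (hopt1 : f' xs + (ContinuousLinearMap.adjoint A) ls = 0)
    (hopt2 : A xs = b)
    (φd φdd Wd : ℝ → ℝ)
    (hφd : ∀ t ∈ Ici t₀, HasDerivAt
      (fun s => 1 / 2 * (‖x s - xs‖ ^ 2 + ‖l s - ls‖ ^ 2)) (φd t) t)
    (hφdd : ∀ t ∈ Ici t₀, HasDerivAt φd (φdd t) t)
    (hWd : ∀ t ∈ Ici t₀, HasDerivAt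
      (fun s => augLagrangian f A b β (x s) ls - augLagrangian f A b β xs (l s)
        + 1 / 2 * (‖x' s‖ ^ 2 + ‖l' s‖ ^ 2)) (Wd t) t) :
    ∀ t ∈ Ici t₀,
      φdd t + α / t * φd t + θ * t * Wd t
        + 1 / (2 * (ℓ : ℝ)) * ‖f' (x t) - f' xs‖ ^ 2
        + β / 2 * ‖A (x t) - b‖ ^ 2 ≤ 0 := by
  -- explicit first derivative of φ
  set P : ℝ → ℝ := fun t => ⟪x t - xs, x' t⟫ + ⟪l t - ls, l' t⟫ with hP
  have hPd : ∀ t ∈ Ici t₀, HasDerivAt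
      (fun s => 1 / 2 * (‖x s - xs‖ ^ 2 + ‖l s - ls‖ ^ 2)) (P t) t := by
    intro t ht
    have hxt : HasDerivAt (fun s => x s - xs) (x' t) t := (hx1 t ht).sub_const xs
    have hlt : HasDerivAt (fun s => l s - ls) (l' t) t := (hl1 t ht).sub_const ls
    have h1 := HasDerivAt.inner ℝ hxt hxt
    have h2 := HasDerivAt.inner ℝ hlt hlt
    have h3 := ((h1.add h2).const_mul (1/2 : ℝ))
    have hfn : (fun s => 1 / 2 * (‖x s - xs‖ ^ 2 + ‖l s - ls‖ ^ 2))
        = fun s => 1 / 2 * (⟪x s - xs, x s - xs⟫ + ⟪l s - ls, l s - ls⟫) := by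
      funext s
      rw [real_inner_self_eq_norm_sq, real_inner_self_eq_norm_sq]
    rw [hfn]
    convert h3 using 1
    · rfl
    · rfl
    · rfl
    simp only [hP]
    rw [real_inner_comm (x' t) (x t - xs), real_inner_comm (l' t) (l t - ls)]
    ring
  have hφdP : ∀ t ∈ Ici t₀, φd t = P t := fun t ht => (hφd t ht).unique (hPd t ht)
  -- second derivative of φ
  have hφdd_eq : ∀ t ∈ Ici t₀, φdd t
      = ⟪x' t, x' t⟫ + ⟪x t - xs, x'' t⟫ + ⟪l' t, l' t⟫ + ⟪l t - ls, l'' t⟫ := by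
    intro t ht
    have hxt : HasDerivAt (fun s => x s - xs) (x' t) t := (hx1 t ht).sub_const xs
    have hlt : HasDerivAt (fun s => l s - ls) (l' t) t := (hl1 t ht).sub_const ls
    have h1 := HasDerivAt.inner ℝ hxt (hx2 t ht)
    have h2 := HasDerivAt.inner ℝ hlt (hl2 t ht)
    have hQ : HasDerivAt P
        (⟪x t - xs, x'' t⟫ + ⟪x' t, x' t⟫ + (⟪l t - ls, l'' t⟫ + ⟪l' t, l' t⟫)) t := by
      exact h1.add h2
    have hu : UniqueDiffWithinAt ℝ (Ici t₀) t := uniqueDiffOn_Ici t₀ t ht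
    have hd1 : HasDerivWithinAt P (φdd t) (Ici t₀) t := by
      refine ((hφdd t ht).hasDerivWithinAt).congr ?_ (hφdP t ht).symm
      intro y hy
      exact (hφdP y hy).symm
    have := (hd1.derivWithin hu).symm.trans (hQ.hasDerivWithinAt.derivWithin hu)
    rw [this]; ring
  -- explicit derivative of W
  have hWd_eq : ∀ t ∈ Ici t₀, Wd t
      = ⟪x' t, f' (x t)⟫ + ⟪A (x' t), ls⟫ + β * ⟪A (x' t), A (x t) - b⟫
        + ⟪x' t, x'' t⟫ + ⟪l' t, l' t⟫ * 0 + ⟪l' t, l'' t⟫ := by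
    intro t ht
    have hAx : HasDerivAt (fun s => A (x s) - b) (A (x' t)) t :=
      (A.hasFDerivAt.comp_hasDerivAt t (hx1 t ht)).sub_const b
    have hfx : HasDerivAt (fun s => f (x s)) ⟪f' (x t), x' t⟫ t := by
      have h := (hgrad (x t)).hasFDerivAt.comp_hasDerivAt t (hx1 t ht)
      simp at h
      exact h
    have hterm2 : HasDerivAt (fun s => ⟪ls, A (x s) - b⟫) ⟪ls, A (x' t)⟫ t := by
      have := HasDerivAt.inner ℝ (hasDerivAt_const t ls) hAx
      simpa using this
    have hterm3 : HasDerivAt (fun s => β / 2 * ‖A (x s) - b‖ ^ 2)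
        (β * ⟪A (x t) - b, A (x' t)⟫) t := by
      have h := (HasDerivAt.inner ℝ hAx hAx).const_mul (β/2 : ℝ)
      have hfn : (fun s => β / 2 * ‖A (x s) - b‖ ^ 2)
          = fun s => β / 2 * ⟪A (x s) - b, A (x s) - b⟫ := by
        funext s; rw [real_inner_self_eq_norm_sq]
      rw [hfn]
      convert h using 1
      · rfl
      · rfl
      rw [real_inner_comm (A (x' t)) (A (x t) - b)]
      ring
    have hL1 : HasDerivAt (fun s => augLagrangian f A b β (x s) ls)
        (⟪f' (x t), x' t⟫ + ⟪ls, A (x' t)⟫ + β * ⟪A (x t) - b, A (x' t)⟫) t :=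
      (hfx.add hterm2).add hterm3
    have hL2 : HasDerivAt (fun s => augLagrangian f A b β xs (l s)) 0 t := by
      have hfn : (fun s => augLagrangian f A b β xs (l s)) = fun _ => f xs := by
        funext s
        simp [augLagrangian, hopt2]
      rw [hfn]
      exact hasDerivAt_const t (f xs)
    have hk1 := HasDerivAt.inner ℝ (hx2 t ht) (hx2 t ht)
    have hk2 := HasDerivAt.inner ℝ (hl2 t ht) (hl2 t ht)
    have hkin : HasDerivAt (fun s => 1 / 2 * (‖x' s‖ ^ 2 + ‖l' s‖ ^ 2))
        (⟪x' t, x'' t⟫ + ⟪l' t, l'' t⟫) t := by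
      have hfn : (fun s => 1 / 2 * (‖x' s‖ ^ 2 + ‖l' s‖ ^ 2))
          = fun s => 1 / 2 * (⟪x' s, x' s⟫ + ⟪l' s, l' s⟫) := by
        funext s; rw [real_inner_self_eq_norm_sq, real_inner_self_eq_norm_sq]
      rw [hfn]
      convert (hk1.add hk2).const_mul (1/2 : ℝ) using 1
      · rfl
      · rfl
      · rfl
      rw [real_inner_comm (x'' t) (x' t), real_inner_comm (l'' t) (l' t)]
      ring
    have hW : HasDerivAt
        (fun s => augLagrangian f A b β (x s) ls - augLagrangian f A b β xs (l s)
          + 1 / 2 * (‖x' s‖ ^ 2 + ‖l' s‖ ^ 2))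
        (⟪f' (x t), x' t⟫ + ⟪ls, A (x' t)⟫ + β * ⟪A (x t) - b, A (x' t)⟫ - 0
          + (⟪x' t, x'' t⟫ + ⟪l' t, l'' t⟫)) t := (hL1.sub hL2).add hkin
    have := (hWd t ht).unique hW
    rw [this]
    rw [real_inner_comm (f' (x t)) (x' t), real_inner_comm ls (A (x' t)),
      real_inner_comm (A (x t) - b) (A (x' t))]
    ring
  intro t ht
  have ht0 : 0 < t := lt_of_lt_of_le ht₀ ht
  have htne : t ≠ 0 := ne_of_gt ht0
  -- scalar consequences of the ODEs
  have hE1 : ∀ v : X, ⟪v, x'' t⟫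
      = -(α/t) * ⟪v, x' t⟫ - ⟪v, f' (x t)⟫ - ⟪A v, l t⟫ - θ*t*⟪A v, l' t⟫
        - β * ⟪A v, A (x t) - b⟫ := by
    intro v
    have h0 := hode1 t ht
    have : ⟪v, x'' t + (α / t) • x' t + f' (x t)
        + (ContinuousLinearMap.adjoint A) (l t + (θ * t) • l' t)
        + β • (ContinuousLinearMap.adjoint A) (A (x t) - b)⟫ = 0 := by
      rw [h0, inner_zero_right]
    rw [inner_add_right, inner_add_right, inner_add_right, inner_add_right,
      real_inner_smul_right, real_inner_smul_right,
      ContinuousLinearMap.adjoint_inner_right, ContinuousLinearMap.adjoint_inner_right,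
      inner_add_right, real_inner_smul_right] at this
    linarith
  have hE2 : ∀ w : Y, ⟪w, l'' t⟫
      = -(α/t) * ⟪w, l' t⟫ + ⟪w, A (x t) - b⟫ + θ*t*⟪w, A (x' t)⟫ := by
    intro w
    have h0 := hode2 t ht
    have : ⟪w, l'' t + (α / t) • l' t - (A (x t + (θ * t) • x' t) - b)⟫ = 0 := by
      rw [h0, inner_zero_right]
    have hexp : A (x t + (θ * t) • x' t) - b = (A (x t) - b) + (θ*t) • A (x' t) := by
      rw [map_add, A.map_smul]; abel
    rw [hexp, inner_sub_right, inner_add_right, inner_add_right,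
      real_inner_smul_right, real_inner_smul_right] at this
    linarith
  have hAv : A (x t - xs) = A (x t) - b := by rw [map_sub, hopt2]
  have hE1v := hE1 (x t - xs)
  rw [hAv] at hE1v
  have hE1x := hE1 (x' t)
  have hE2w := hE2 (l t - ls)
  have hE2l := hE2 (l' t)
  -- commutation / expansion facts
  have hc1 : ⟪l t - ls, A (x' t)⟫ = ⟪A (x' t), l t⟫ - ⟪A (x' t), ls⟫ := by
    rw [real_inner_comm, inner_sub_right]
  have hc2 : ⟪l' t, A (x t) - b⟫ = ⟪A (x t) - b, l' t⟫ := real_inner_comm _ _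
  have hc3 : ⟪l' t, A (x' t)⟫ = ⟪A (x' t), l' t⟫ := real_inner_comm _ _
  have hc4 : ⟪l t - ls, A (x t) - b⟫ = ⟪A (x t) - b, l t⟫ - ⟪A (x t) - b, ls⟫ := by
    rw [real_inner_comm, inner_sub_right]
  have hls : ⟪A (x t) - b, ls⟫ = -⟪x t - xs, f' xs⟫ := by
    rw [← hAv, ← ContinuousLinearMap.adjoint_inner_right]
    have : (ContinuousLinearMap.adjoint A) ls = -f' xs :=
      eq_neg_of_add_eq_zero_right hopt1
    rw [this, inner_neg_right]
  -- norm identities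
  have hn1 : ⟪x' t, x' t⟫ = ‖x' t‖ ^ 2 := real_inner_self_eq_norm_sq _
  have hn2 : ⟪l' t, l' t⟫ = ‖l' t‖ ^ 2 := real_inner_self_eq_norm_sq _
  have hn3 : ⟪A (x t) - b, A (x t) - b⟫ = ‖A (x t) - b‖ ^ 2 := real_inner_self_eq_norm_sq _
  -- the big algebraic identity
  have hS : φdd t + α / t * φd t + θ * t * Wd t
      = (1 - θ*α) * (‖x' t‖ ^ 2 + ‖l' t‖ ^ 2)
        - (⟪x t - xs, f' (x t)⟫ - ⟪x t - xs, f' xs⟫)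
        - β * ‖A (x t) - b‖ ^ 2 := by
    rw [hφdd_eq t ht, hφdP t ht, hWd_eq t ht]
    simp only [hP]
    rw [hE1v, hE1x, hE2w, hE2l, hc1, hc2, hc3, hc4, hls, hn1, hn2, hn3]
    field_simp
    ring
  -- cocoercivity
  have hcoco := cocoercive f f' hconv hgrad ℓ hℓ hlip (x t) xs
  have hc5 : ⟪f' (x t) - f' xs, x t - xs⟫
      = ⟪x t - xs, f' (x t)⟫ - ⟪x t - xs, f' xs⟫ := by
    rw [real_inner_comm, inner_sub_right]
  rw [hc5] at hcoco
  -- sign facts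
  have hα1 : (0:ℝ) < α - 1 := by linarith
  have hθpos : 0 < θ := lt_trans (div_pos one_pos hα1) hθ1
  have hθα : 1 ≤ θ * α := by
    have h1 : 1 < θ * (α - 1) := by
      rw [div_lt_iff₀ hα1] at hθ1
      linarith
    have h2 : θ * α = θ * (α - 1) + θ := by ring
    linarith
  have hsum : (0:ℝ) ≤ ‖x' t‖ ^ 2 + ‖l' t‖ ^ 2 := by positivity
  have hprod : (1 - θ*α) * (‖x' t‖ ^ 2 + ‖l' t‖ ^ 2) ≤ 0 := by
    apply mul_nonpos_of_nonpos_of_nonneg (by linarith) hsum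
  have hbr : 0 ≤ β * ‖A (x t) - b‖ ^ 2 := by positivity
  linarith [hS, hcoco, hprod, hbr]
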